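/- arXiv:2409.11766 — 2 statements merged into one kernel-verified Lean document; each statement's English description precedes it below -/
import Mathlib

section
/- Fix $a \in (0,\pi]$. The set $\{\varphi \in H^2(0,\pi) : \varphi(\pi) = 0,\ \varphi'(0) = 0,\ \varphi'(a) = 0\}$ is dense in the space $H^1_{(\pi)}(0,\pi) = \{\varphi \in H^1(0,\pi) : \varphi(\pi) = 0\}$ with respect to the $H^1$ norm. -/
open MeasureTheory Set Real

set_option maxHeartbeats 1000000 in
/-- for fixed `a ∈ (0,π]`, the set
`{φ ∈ H²(0,π) : φ(π) = 0, φ'(0) = 0, φ'(a) = 0}` is dense, for the `H¹` norm, in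
`H¹_{(π)}(0,π) = {φ ∈ H¹(0,π) : φ(π) = 0}`.  `H¹` functions are represented by a
continuous representative `φ` together with a weak derivative `g ∈ L²`; `H²` functions
by a `C¹` representative `χ` whose derivative `χ'` is itself `H¹` with weak second
derivative `k ∈ L²`. -/
theorem stmt12 (a : ℝ) (ha : a ∈ Ioc 0 π) :
    ∀ φ g : ℝ → ℝ,
      ContinuousOn φ (Icc 0 π) →
      (∀ t ∈ Icc 0 π, φ t = φ 0 + ∫ s in (0:ℝ)..t, g s) →
      MemLp g 2 (volume.restrict (Ioo 0 π)) →
      φ π = 0 →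
      ∀ ε > 0, ∃ χ χ' k : ℝ → ℝ,
        ContinuousOn χ (Icc 0 π) ∧
        (∀ t ∈ Icc 0 π, χ t = χ 0 + ∫ s in (0:ℝ)..t, χ' s) ∧
        ContinuousOn χ' (Icc 0 π) ∧
        (∀ t ∈ Icc 0 π, χ' t = χ' 0 + ∫ s in (0:ℝ)..t, k s) ∧
        MemLp k 2 (volume.restrict (Ioo 0 π)) ∧
        χ π = 0 ∧ χ' 0 = 0 ∧ χ' a = 0 ∧
        (∫ s in Ioo 0 π, (φ s - χ s) ^ 2) + (∫ s in Ioo 0 π, (g s - χ' s) ^ 2)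
          < ε ^ 2 := by
  obtain ⟨ha0, haπ⟩ := ha
  intro φ g hφc hφF hg hφπ ε hε
  have hπ : (0:ℝ) < π := Real.pi_pos
  haveI : IsFiniteMeasure (volume.restrict (Ioo (0:ℝ) π)) :=
    ⟨by rw [Measure.restrict_apply_univ]; simp [Real.volume_Ioo]⟩
  have memcont : ∀ h : ℝ → ℝ, Continuous h → MemLp h 2 (volume.restrict (Ioo 0 π)) := by
    intro h hh
    obtain ⟨C, hC⟩ := (isCompact_Icc : IsCompact (Icc (0:ℝ) π)).exists_bound_of_continuousOn
      hh.continuousOn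
    exact MemLp.of_bound (hh.aestronglyMeasurable.restrict) C
      ((ae_restrict_iff' measurableSet_Ioo).2
        (Filter.Eventually.of_forall fun x hx => hC x (Ioo_subset_Icc_self hx)))
  have haeset : ∀ u v : ℝ, 0 ≤ u → v ≤ π → Ioc u v ≤ᵐ[volume] Ioo 0 π := by
    intro u v hu hv
    refine ae_le_set.2 (measure_mono_null ?_ (measure_singleton π))
    rintro x ⟨⟨hx1, hx2⟩, hx3⟩
    have hx0 : 0 < x := lt_of_le_of_lt hu hx1
    have hxπ : x ≤ π := le_trans hx2 hv
    simp only [mem_Ioo, not_and, not_lt] at hx3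
    exact mem_singleton_iff.2 (le_antisymm hxπ (hx3 hx0))
  -- budget
  obtain ⟨c, hceq⟩ : ∃ c : ℝ, c = ε ^ 2 / (10 * (π ^ 2 + 1)) := ⟨_, rfl⟩
  have hcpos : 0 < c := by rw [hceq]; positivity
  ---- Step A : continuous compactly supported approximation of g in L²
  have hg0 : MemLp ((Ioo (0:ℝ) π).indicator g) 2 volume :=
    (memLp_indicator_iff_restrict measurableSet_Ioo).2 hg
  have hg0' : MemLp ((Ioo (0:ℝ) π).indicator g) (ENNReal.ofReal 2) volume := by
    rwa [show (ENNReal.ofReal 2) = 2 by norm_num]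
  obtain ⟨f, -, hf_close, hf_cont, hf_mem'⟩ :=
    hg0'.exists_hasCompactSupport_integral_rpow_sub_le (by norm_num : (0:ℝ) < 2) hcpos
  have hf_mem : MemLp f 2 volume := by
    rwa [show (ENNReal.ofReal 2) = 2 by norm_num] at hf_mem'
  have hfμ : MemLp f 2 (volume.restrict (Ioo 0 π)) := hf_mem.restrict _
  have hT1 : ∫ s in Ioo 0 π, (g s - f s) ^ 2 ≤ c := by
    have hint : Integrable (fun x => ‖(Ioo (0:ℝ) π).indicator g x - f x‖ ^ (2:ℝ)) volume := by
      have := (hg0.sub hf_mem).integrable_norm_rpow (by norm_num) (by norm_num)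
      simpa using this
    calc ∫ s in Ioo 0 π, (g s - f s) ^ 2
        = ∫ s in Ioo 0 π, ‖(Ioo (0:ℝ) π).indicator g s - f s‖ ^ (2:ℝ) := by
          refine setIntegral_congr_fun measurableSet_Ioo (fun x hx => ?_)
          rw [Set.indicator_of_mem hx, Real.norm_eq_abs,
            show (2:ℝ) = ((2:ℕ):ℝ) by norm_num, Real.rpow_natCast, sq_abs]
      _ ≤ ∫ s, ‖(Ioo (0:ℝ) π).indicator g s - f s‖ ^ (2:ℝ) :=
          setIntegral_le_integral hint (Filter.Eventually.of_forall fun x => by positivity)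
      _ ≤ c := hf_close
  ---- Step B : Weierstrass polynomial approximation of f
  have hcπ : (0:ℝ) < c / π := div_pos hcpos hπ
  obtain ⟨q, hq⟩ := exists_polynomial_near_of_continuousOn 0 π f hf_cont.continuousOn
    (Real.sqrt (c / π)) (Real.sqrt_pos.2 hcπ)
  obtain ⟨M, hM⟩ := (isCompact_Icc : IsCompact (Icc (0:ℝ) π)).exists_bound_of_continuousOn
    q.continuous.continuousOn
  have hM0 : 0 ≤ M := le_trans (norm_nonneg _) (hM 0 ⟨le_rfl, hπ.le⟩)
  have hT2 : ∫ s in Ioo 0 π, (f s - q.eval s) ^ 2 ≤ c := by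
    have hle : ∀ x ∈ Ioo (0:ℝ) π, (f x - q.eval x) ^ 2 ≤ c / π := by
      intro x hx
      have h1 := hq x (Ioo_subset_Icc_self hx)
      have h2 : |f x - q.eval x| ≤ Real.sqrt (c / π) := by
        rw [abs_sub_comm]; exact h1.le
      calc (f x - q.eval x) ^ 2 = |f x - q.eval x| ^ 2 := (sq_abs _).symm
        _ ≤ Real.sqrt (c / π) ^ 2 := by
            nlinarith [abs_nonneg (f x - q.eval x), Real.sqrt_nonneg (c / π)]
        _ = c / π := Real.sq_sqrt hcπ.le
    calc ∫ s in Ioo 0 π, (f s - q.eval s) ^ 2 ≤ ∫ _s in Ioo (0:ℝ) π, (c / π) := by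
          refine setIntegral_mono_on ?_ ?_ measurableSet_Ioo hle
          · exact ((hf_cont.sub q.continuous).pow 2).integrableOn_Icc.mono_set
              Ioo_subset_Icc_self
          · exact integrableOn_const
              (by rw [Real.volume_Ioo]; exact ENNReal.ofReal_ne_top)
      _ = c := by
          rw [setIntegral_const, measureReal_def, Real.volume_Ioo, sub_zero, ENNReal.toReal_ofReal hπ.le,
            smul_eq_mul]
          field_simp
  ---- Step C : smooth cutoff
  obtain ⟨η, hηeq⟩ : ∃ η : ℝ, η = c / (4 * (M ^ 2 + 1)) := ⟨_, rfl⟩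
  have hηpos : 0 < η := by rw [hηeq]; exact div_pos hcpos (by positivity)
  obtain ⟨ψ, hψdef⟩ : ∃ ψ : ℝ → ℝ, ψ = fun x =>
      Real.smoothTransition ((x / η) ^ 2) * Real.smoothTransition (((x - a) / η) ^ 2) :=
    ⟨_, rfl⟩
  have hψc1 : ContDiff ℝ 1 ψ := by
    rw [hψdef]
    exact (Real.smoothTransition.contDiff.comp ((contDiff_id.div_const η).pow 2)).mul
      (Real.smoothTransition.contDiff.comp
        (((contDiff_id.sub contDiff_const).div_const η).pow 2))
  have hψ0 : ψ 0 = 0 := by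
    rw [hψdef]; simp [Real.smoothTransition.zero]
  have hψa : ψ a = 0 := by
    rw [hψdef]; simp [Real.smoothTransition.zero]
  have hψ01 : ∀ x, 0 ≤ ψ x ∧ ψ x ≤ 1 := by
    intro x
    rw [hψdef]
    constructor
    · exact mul_nonneg (Real.smoothTransition.nonneg _) (Real.smoothTransition.nonneg _)
    · nlinarith [Real.smoothTransition.nonneg ((x / η) ^ 2),
        Real.smoothTransition.le_one ((x / η) ^ 2),
        Real.smoothTransition.nonneg (((x - a) / η) ^ 2),
        Real.smoothTransition.le_one (((x - a) / η) ^ 2)]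
  obtain ⟨E, hEdef⟩ : ∃ E : Set ℝ, E = Icc (-η) η ∪ Icc (a - η) (a + η) := ⟨_, rfl⟩
  have hψ1 : ∀ x ∉ E, ψ x = 1 := by
    intro x hx
    rw [hEdef, Set.mem_union, not_or] at hx
    have h1 : η < |x| := by
      by_contra h
      push_neg at h
      exact hx.1 ⟨neg_le_of_abs_le h, le_of_abs_le h⟩
    have h2 : η < |x - a| := by
      by_contra h
      push_neg at h
      exact hx.2 ⟨by linarith [neg_le_of_abs_le h, neg_abs_le (x - a), abs_le.1 h],
        by linarith [le_of_abs_le h]⟩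
    have e1 : (1:ℝ) ≤ (x / η) ^ 2 := by
      rw [div_pow, le_div_iff₀ (pow_pos hηpos 2), one_mul, ← sq_abs x]
      nlinarith
    have e2 : (1:ℝ) ≤ ((x - a) / η) ^ 2 := by
      rw [div_pow, le_div_iff₀ (pow_pos hηpos 2), one_mul, ← sq_abs (x - a)]
      nlinarith
    rw [hψdef]
    simp [Real.smoothTransition.one_of_one_le e1, Real.smoothTransition.one_of_one_le e2]
  ---- χ' and k
  obtain ⟨χ', hχ'def⟩ : ∃ χ' : ℝ → ℝ, χ' = fun x => q.eval x * ψ x := ⟨_, rfl⟩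
  have hψd : ∀ x, HasDerivAt ψ (deriv ψ x) x := fun x =>
    (hψc1.differentiable one_ne_zero x).hasDerivAt
  obtain ⟨k, hkdef⟩ : ∃ k : ℝ → ℝ,
      k = fun x => q.derivative.eval x * ψ x + q.eval x * deriv ψ x := ⟨_, rfl⟩
  have hχ'd : ∀ x : ℝ, HasDerivAt χ' (k x) x := by
    intro x
    simp only [hχ'def, hkdef]
    exact (q.hasDerivAt x).mul (hψd x)
  have hψdc : Continuous (deriv ψ) := hψc1.continuous_deriv le_rfl
  have hkc : Continuous k := by
    rw [hkdef]
    exact (q.derivative.continuous.mul hψc1.continuous).add (q.continuous.mul hψdc)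
  have hχ'c : Continuous χ' := by
    rw [hχ'def]; exact q.continuous.mul hψc1.continuous
  have hχ'F : ∀ t ∈ Icc (0:ℝ) π, χ' t = χ' 0 + ∫ s in (0:ℝ)..t, k s := by
    intro t _
    have h := intervalIntegral.integral_eq_sub_of_hasDerivAt
      (f := χ') (f' := k) (fun x _ => hχ'd x) (hkc.intervalIntegrable 0 t)
    linarith [h]
  have hkmem : MemLp k 2 (volume.restrict (Ioo 0 π)) := memcont k hkc
  have hχ'μ : MemLp χ' 2 (volume.restrict (Ioo 0 π)) := memcont χ' hχ'c
  have hqμ : MemLp (fun x => q.eval x) 2 (volume.restrict (Ioo 0 π)) :=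
    memcont _ q.continuous
  have hχ'0 : χ' 0 = 0 := by rw [hχ'def]; simp [hψ0]
  have hχ'a : χ' a = 0 := by rw [hχ'def]; simp [hψa]
  ---- T3 : cutoff error
  have hT3 : ∫ s in Ioo 0 π, (q.eval s - χ' s) ^ 2 ≤ c := by
    have hEmeas : MeasurableSet E := by
      rw [hEdef]; exact measurableSet_Icc.union measurableSet_Icc
    have hpt : ∀ x ∈ Ioo (0:ℝ) π,
        (q.eval x - χ' x) ^ 2 ≤ E.indicator (fun _ => M ^ 2) x := by
      intro x hx
      by_cases hxE : x ∈ E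
      · rw [Set.indicator_of_mem hxE]
        have h1 := hM x (Ioo_subset_Icc_self hx)
        rw [Real.norm_eq_abs] at h1
        have h2 := hψ01 x
        have h3 : (q.eval x - χ' x) ^ 2 = (q.eval x) ^ 2 * (1 - ψ x) ^ 2 := by
          rw [hχ'def]; ring
        rw [h3]
        have hq2 : (q.eval x) ^ 2 ≤ M ^ 2 := by
          rw [← sq_abs]; exact pow_le_pow_left₀ (abs_nonneg _) h1 2
        have hψ2 : (1 - ψ x) ^ 2 ≤ 1 := by nlinarith [h2.1, h2.2]
        calc (q.eval x) ^ 2 * (1 - ψ x) ^ 2 ≤ M ^ 2 * (1 - ψ x) ^ 2 :=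
            mul_le_mul_of_nonneg_right hq2 (sq_nonneg _)
          _ ≤ M ^ 2 * 1 := mul_le_mul_of_nonneg_left hψ2 (by positivity)
          _ = M ^ 2 := mul_one _
      · rw [Set.indicator_of_notMem hxE, hχ'def]
        simp [hψ1 x hxE]
    have hvol : (volume (Ioo 0 π ∩ E)).toReal ≤ 4 * η := by
      refine ENNReal.toReal_le_of_le_ofReal (by linarith [hηpos]) ?_
      calc volume (Ioo 0 π ∩ E) ≤ volume E := measure_mono inter_subset_right
        _ ≤ volume (Icc (-η) η) + volume (Icc (a - η) (a + η)) := by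
            rw [hEdef]; exact measure_union_le _ _
        _ = ENNReal.ofReal (2 * η) + ENNReal.ofReal (2 * η) := by
            rw [Real.volume_Icc, Real.volume_Icc,
              show η - -η = 2 * η by ring, show a + η - (a - η) = 2 * η by ring]
        _ = ENNReal.ofReal (4 * η) := by
            rw [← ENNReal.ofReal_add (by linarith [hηpos]) (by linarith [hηpos])]
            congr 1
            ring
    calc ∫ s in Ioo 0 π, (q.eval s - χ' s) ^ 2
        ≤ ∫ s in Ioo 0 π, E.indicator (fun _ => M ^ 2) s := by
          refine setIntegral_mono_on ?_ ((integrable_const _).indicator hEmeas)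
            measurableSet_Ioo hpt
          exact ((q.continuous.sub hχ'c).pow 2).integrableOn_Icc.mono_set Ioo_subset_Icc_self
      _ = ∫ _s in Ioo 0 π ∩ E, (M ^ 2 : ℝ) := setIntegral_indicator hEmeas
      _ = (volume (Ioo 0 π ∩ E)).toReal * M ^ 2 := by rw [setIntegral_const, measureReal_def, smul_eq_mul]
      _ ≤ (4 * η) * M ^ 2 := mul_le_mul_of_nonneg_right hvol (sq_nonneg M)
      _ ≤ c := by
          have h4 : 4 * η * (M ^ 2 + 1) = c := by
            rw [hηeq]; field_simp
          nlinarith [hηpos]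
  ---- χ
  obtain ⟨χ, hχdef⟩ : ∃ χ : ℝ → ℝ,
      χ = fun t => (∫ s in (0:ℝ)..t, χ' s) - ∫ s in (0:ℝ)..π, χ' s := ⟨_, rfl⟩
  have hχc : Continuous χ := by
    rw [hχdef]
    exact (intervalIntegral.continuous_primitive
      (fun u v => hχ'c.intervalIntegrable u v) 0).sub continuous_const
  have hχF : ∀ t ∈ Icc (0:ℝ) π, χ t = χ 0 + ∫ s in (0:ℝ)..t, χ' s := by
    intro t _
    rw [hχdef]
    simp only [intervalIntegral.integral_same]
    ring
  have hχπ : χ π = 0 := by rw [hχdef]; simp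
  ---- global L² error S
  have hD : MemLp (fun s => g s - χ' s) 2 (volume.restrict (Ioo 0 π)) := hg.sub hχ'μ
  obtain ⟨S, hSdef⟩ : ∃ S : ℝ, S = ∫ s in Ioo 0 π, (g s - χ' s) ^ 2 := ⟨_, rfl⟩
  have hSnonneg : 0 ≤ S := by
    rw [hSdef]; exact integral_nonneg fun x => sq_nonneg _
  have hS9 : S ≤ 9 * c := by
    have hpt : ∀ x : ℝ, (g x - χ' x) ^ 2 ≤
        3 * (g x - f x) ^ 2 + 3 * (f x - q.eval x) ^ 2 + 3 * (q.eval x - χ' x) ^ 2 := by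
      intro x
      nlinarith [sq_nonneg (g x - f x - (f x - q.eval x)),
        sq_nonneg (f x - q.eval x - (q.eval x - χ' x)),
        sq_nonneg (g x - f x - (q.eval x - χ' x))]
    have hint1 : Integrable (fun x => (g x - f x) ^ 2) (volume.restrict (Ioo 0 π)) :=
      (hg.sub hfμ).integrable_sq
    have hint2 : Integrable (fun x => (f x - q.eval x) ^ 2) (volume.restrict (Ioo 0 π)) :=
      (hfμ.sub hqμ).integrable_sq
    have hint3 : Integrable (fun x => (q.eval x - χ' x) ^ 2) (volume.restrict (Ioo 0 π)) :=
      (hqμ.sub hχ'μ).integrable_sq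
    have hintD : Integrable (fun x => (g x - χ' x) ^ 2) (volume.restrict (Ioo 0 π)) :=
      hD.integrable_sq
    have hint1' : Integrable (fun x => 3 * (g x - f x) ^ 2) (volume.restrict (Ioo 0 π)) :=
      hint1.const_mul 3
    have hint2' : Integrable (fun x => 3 * (f x - q.eval x) ^ 2)
        (volume.restrict (Ioo 0 π)) := hint2.const_mul 3
    have hint3' : Integrable (fun x => 3 * (q.eval x - χ' x) ^ 2)
        (volume.restrict (Ioo 0 π)) := hint3.const_mul 3
    have hint12 : Integrable (fun x => 3 * (g x - f x) ^ 2 + 3 * (f x - q.eval x) ^ 2)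
        (volume.restrict (Ioo 0 π)) := hint1'.add hint2'
    have hmono : (∫ s in Ioo 0 π, (g s - χ' s) ^ 2) ≤ ∫ x in Ioo 0 π,
        (3 * (g x - f x) ^ 2 + 3 * (f x - q.eval x) ^ 2 + 3 * (q.eval x - χ' x) ^ 2) :=
      integral_mono hintD (hint12.add hint3') hpt
    rw [integral_add hint12 hint3', integral_add hint1' hint2',
      integral_const_mul, integral_const_mul, integral_const_mul] at hmono
    rw [hSdef]
    linarith [hT1, hT2, hT3, hmono]
  ---- Hölder : L¹ bound
  obtain ⟨B, hBdef⟩ : ∃ B : ℝ, B = ∫ s in Ioo 0 π, |g s - χ' s| := ⟨_, rfl⟩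
  have hBnn : 0 ≤ B := by
    rw [hBdef]; exact integral_nonneg fun x => abs_nonneg _
  have hBsq : B ^ 2 ≤ S * π := by
    have hDabs : MemLp (fun x => |g x - χ' x|) 2 (volume.restrict (Ioo 0 π)) := by
      simpa using hD.norm
    have hconj : Real.HolderConjugate 2 2 := ⟨by norm_num, by norm_num, by norm_num⟩
    have h := integral_mul_le_Lp_mul_Lq_of_nonneg hconj
      (μ := volume.restrict (Ioo 0 π))
      (f := fun x => |g x - χ' x|) (g := fun _ => (1:ℝ))
      (Filter.Eventually.of_forall fun x => abs_nonneg _)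
      (Filter.Eventually.of_forall fun _ => zero_le_one)
      (by rw [show (ENNReal.ofReal 2) = 2 by norm_num]; exact hDabs)
      (by rw [show (ENNReal.ofReal 2) = 2 by norm_num]; exact memLp_const 1)
    simp only [mul_one] at h
    have e1 : ∫ x in Ioo 0 π, |g x - χ' x| ^ (2:ℝ) = S := by
      rw [hSdef]
      refine setIntegral_congr_fun measurableSet_Ioo (fun x _ => ?_)
      rw [show (2:ℝ) = ((2:ℕ):ℝ) by norm_num, Real.rpow_natCast, sq_abs]
    have e2 : ∫ _x in Ioo (0:ℝ) π, (1:ℝ) ^ (2:ℝ) = π := by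
      simp only [Real.one_rpow]
      rw [setIntegral_const, measureReal_def, smul_eq_mul, Real.volume_Ioo, sub_zero,
        ENNReal.toReal_ofReal hπ.le, mul_one]
    rw [e1, e2] at h
    have hB' : B ≤ S ^ ((1:ℝ)/2) * π ^ ((1:ℝ)/2) := by rw [hBdef]; exact h
    calc B ^ 2 ≤ (S ^ ((1:ℝ)/2) * π ^ ((1:ℝ)/2)) ^ 2 := by
          nlinarith [Real.rpow_nonneg hSnonneg ((1:ℝ)/2), Real.rpow_nonneg hπ.le ((1:ℝ)/2)]
      _ = S * π := by
          rw [mul_pow, ← Real.rpow_natCast (S ^ ((1:ℝ)/2)) 2,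
            ← Real.rpow_natCast (π ^ ((1:ℝ)/2)) 2, ← Real.rpow_mul hSnonneg,
            ← Real.rpow_mul hπ.le]
          norm_num
  ---- pointwise bound on φ - χ
  have hgIoo : Integrable g (volume.restrict (Ioo 0 π)) := hg.integrable one_le_two
  have hgII : ∀ u v : ℝ, 0 ≤ u → v ≤ π → u ≤ v → IntervalIntegrable g volume u v := by
    intro u v hu hv huv
    rw [intervalIntegrable_iff_integrableOn_Ioc_of_le huv]
    exact MeasureTheory.IntegrableOn.mono_set_ae hgIoo (haeset u v hu hv)
  have hkey : ∀ t ∈ Icc (0:ℝ) π, φ t - χ t = -∫ s in t..π, (g s - χ' s) := by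
    intro t ht
    have h1 : φ t = φ 0 + ∫ s in (0:ℝ)..t, g s := hφF t ht
    have h2 : (0:ℝ) = φ 0 + ∫ s in (0:ℝ)..π, g s := by
      have := hφF π (right_mem_Icc.2 hπ.le)
      rw [hφπ] at this
      exact this
    have hDII : ∀ u v : ℝ, 0 ≤ u → v ≤ π → u ≤ v →
        IntervalIntegrable (fun s => g s - χ' s) volume u v := fun u v hu hv huv =>
      (hgII u v hu hv huv).sub (hχ'c.intervalIntegrable u v)
    have hadd : (∫ s in (0:ℝ)..t, (g s - χ' s)) + ∫ s in t..π, (g s - χ' s)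
        = ∫ s in (0:ℝ)..π, (g s - χ' s) :=
      intervalIntegral.integral_add_adjacent_intervals (hDII 0 t le_rfl ht.2 ht.1)
        (hDII t π ht.1 le_rfl ht.2)
    have e1 : ∫ s in (0:ℝ)..t, (g s - χ' s)
        = (∫ s in (0:ℝ)..t, g s) - ∫ s in (0:ℝ)..t, χ' s :=
      intervalIntegral.integral_sub (hgII 0 t le_rfl ht.2 ht.1) (hχ'c.intervalIntegrable 0 t)
    have e2 : ∫ s in (0:ℝ)..π, (g s - χ' s)
        = (∫ s in (0:ℝ)..π, g s) - ∫ s in (0:ℝ)..π, χ' s :=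
      intervalIntegral.integral_sub (hgII 0 π le_rfl le_rfl hπ.le)
        (hχ'c.intervalIntegrable 0 π)
    have hχt : χ t = (∫ s in (0:ℝ)..t, χ' s) - ∫ s in (0:ℝ)..π, χ' s := by rw [hχdef]
    rw [hχt, h1]
    linarith [hadd, e1, e2]
  have hbound : ∀ t ∈ Icc (0:ℝ) π, |φ t - χ t| ≤ B := by
    intro t ht
    rw [hkey t ht, abs_neg]
    have hDabsint : IntegrableOn (fun s => |g s - χ' s|) (Ioo 0 π) volume :=
      (hD.integrable one_le_two).abs
    calc |∫ s in t..π, (g s - χ' s)| ≤ ∫ s in t..π, |g s - χ' s| :=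
        intervalIntegral.abs_integral_le_integral_abs ht.2
      _ = ∫ s in Ioc t π, |g s - χ' s| := intervalIntegral.integral_of_le ht.2
      _ ≤ ∫ s in Ioo 0 π, |g s - χ' s| :=
          setIntegral_mono_set hDabsint
            (Filter.Eventually.of_forall fun x => abs_nonneg _)
            (haeset t π ht.1 le_rfl)
      _ = B := hBdef.symm
  ---- L² bound on φ - χ
  have hφχsq : ∫ s in Ioo 0 π, (φ s - χ s) ^ 2 ≤ π * B ^ 2 := by
    have hint : IntegrableOn (fun s => (φ s - χ s) ^ 2) (Ioo 0 π) volume :=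
      (((hφc.sub hχc.continuousOn).pow 2).integrableOn_Icc).mono_set Ioo_subset_Icc_self
    calc ∫ s in Ioo 0 π, (φ s - χ s) ^ 2 ≤ ∫ _s in Ioo (0:ℝ) π, B ^ 2 := by
          refine setIntegral_mono_on hint
            (integrableOn_const
              (by rw [Real.volume_Ioo]; exact ENNReal.ofReal_ne_top))
            measurableSet_Ioo ?_
          intro x hx
          have h := hbound x (Ioo_subset_Icc_self hx)
          nlinarith [abs_nonneg (φ x - χ x), sq_abs (φ x - χ x)]
      _ = π * B ^ 2 := by
          rw [setIntegral_const, measureReal_def, smul_eq_mul, Real.volume_Ioo, sub_zero,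
            ENNReal.toReal_ofReal hπ.le]
  ---- conclusion
  refine ⟨χ, χ', k, hχc.continuousOn, hχF, hχ'c.continuousOn, hχ'F, hkmem, hχπ, hχ'0,
    hχ'a, ?_⟩
  have hu : c * (10 * (π ^ 2 + 1)) = ε ^ 2 := by
    rw [hceq]; field_simp
  have hε2 : 0 < ε ^ 2 := by positivity
  have hπ2 : (0:ℝ) < π ^ 2 + 1 := by positivity
  have hfinal : (π ^ 2 + 1) * S < ε ^ 2 := by
    nlinarith [mul_le_mul_of_nonneg_left hS9 hπ2.le, hu, mul_pos hcpos hπ2]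
  have h1 : ∫ s in Ioo 0 π, (φ s - χ s) ^ 2 ≤ π ^ 2 * S := by
    nlinarith [hφχsq, hBsq, hπ]
  rw [← hSdef]
  nlinarith [h1, hfinal, hSnonneg]
end

section
/- Let $X, U, Y$ be Hilbert spaces and $L : X \to Y$, $R : U \to Y$ bounded linear operators. Then $\operatorname{Range} L \subseteq \operatorname{Range} R$ if and only if there exists $c > 0$ such that $\|L^* y\|_{X} \le c\, \|R^* y\|_{U}$ for all $y \in Y$. -/
set_option maxHeartbeats 1000000

open ContinuousLinearMap Filter Topology

/-- Douglas range-inclusion lemma: for bounded operators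
`L : X → Y`, `R : U → Y` between Hilbert spaces, `Range L ⊆ Range R` if and only if
there is `c > 0` with `‖L^* y‖ ≤ c ‖R^* y‖` for all `y ∈ Y`. -/
theorem stmt18 {X U Y : Type*}
    [NormedAddCommGroup X] [InnerProductSpace ℝ X] [CompleteSpace X]
    [NormedAddCommGroup U] [InnerProductSpace ℝ U] [CompleteSpace U]
    [NormedAddCommGroup Y] [InnerProductSpace ℝ Y] [CompleteSpace Y]
    (L : X →L[ℝ] Y) (R : U →L[ℝ] Y) :
    Set.range L ⊆ Set.range R ↔
      ∃ c > 0, ∀ y : Y,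
        ‖ContinuousLinearMap.adjoint L y‖ ≤ c * ‖ContinuousLinearMap.adjoint R y‖ := by
  classical
  constructor
  · -- range inclusion → majorization, via Douglas factorization + closed graph theorem
    intro h
    set K : Submodule ℝ U := LinearMap.ker (R : U →ₗ[ℝ] Y) with hKdef
    have huniq : ∀ u v : U, u ∈ Kᗮ → v ∈ Kᗮ → R u = R v → u = v := by
      intro u v hu hv huv
      have h1 : u - v ∈ K := by simp [hKdef, LinearMap.mem_ker, map_sub, huv]
      have h2 : u - v ∈ Kᗮ := Submodule.sub_mem _ hu hv
      have h3 : (inner ℝ (u - v) (u - v) : ℝ) = 0 :=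
        Submodule.inner_right_of_mem_orthogonal h1 h2
      have := inner_self_eq_zero.mp h3
      exact sub_eq_zero.mp this
    have hex : ∀ x : X, ∃ u : U, u ∈ Kᗮ ∧ R u = L x := by
      intro x
      obtain ⟨u₀, hu₀⟩ := h ⟨x, rfl⟩
      refine ⟨u₀ - (K.orthogonalProjectionOnto u₀ : U),
        Submodule.sub_starProjection_mem_orthogonal u₀, ?_⟩
      have hz : R ((K.orthogonalProjectionOnto u₀ : U)) = 0 := (K.orthogonalProjectionOnto u₀).2
      rw [map_sub, hz, sub_zero, hu₀]
    choose D hDmem hDeq using hex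
    have hadd : ∀ x y : X, D (x + y) = D x + D y := by
      intro x y
      refine (huniq _ _ (hDmem _) (Submodule.add_mem _ (hDmem x) (hDmem y)) ?_)
      rw [hDeq, map_add, map_add, hDeq, hDeq]
    have hsmul : ∀ (a : ℝ) (x : X), D (a • x) = a • D x := by
      intro a x
      refine (huniq _ _ (hDmem _) (Submodule.smul_mem _ a (hDmem x)) ?_)
      rw [hDeq, map_smul, map_smul, hDeq]
    let Dl : X →ₗ[ℝ] U :=
      { toFun := D, map_add' := hadd, map_smul' := hsmul }
    have hcont : Continuous Dl := by
      apply Dl.continuous_of_seq_closed_graph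
      intro u x y hu hDu
      have h1 : Tendsto (fun n => R (Dl (u n))) atTop (𝓝 (R y)) :=
        (R.continuous.tendsto y).comp hDu
      have h2 : Tendsto (fun n => R (Dl (u n))) atTop (𝓝 (L x)) := by
        have : (fun n => R (Dl (u n))) = fun n => L (u n) := by
          funext n; exact hDeq (u n)
        rw [this]
        exact (L.continuous.tendsto x).comp hu
      have hRy : R y = L x := tendsto_nhds_unique h1 h2
      have hymem : y ∈ Kᗮ := by
        have hclosed : IsClosed (Kᗮ : Set U) := Submodule.isClosed_orthogonal K
        exact hclosed.mem_of_tendsto hDu (Filter.Eventually.of_forall fun n => hDmem (u n))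
      exact huniq y (D x) hymem (hDmem x) (by rw [hRy, hDeq])
    let Dc : X →L[ℝ] U := ⟨Dl, hcont⟩
    have hfact : L = R.comp Dc := by
      ext x; exact (hDeq x).symm
    refine ⟨‖ContinuousLinearMap.adjoint Dc‖ + 1, by positivity, fun y => ?_⟩
    have : ContinuousLinearMap.adjoint L =
        (ContinuousLinearMap.adjoint Dc).comp (ContinuousLinearMap.adjoint R) := by
      rw [hfact, ContinuousLinearMap.adjoint_comp]
    rw [this]
    calc ‖(ContinuousLinearMap.adjoint Dc) ((ContinuousLinearMap.adjoint R) y)‖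
        ≤ ‖ContinuousLinearMap.adjoint Dc‖ * ‖(ContinuousLinearMap.adjoint R) y‖ :=
          (ContinuousLinearMap.adjoint Dc).le_opNorm _
      _ ≤ (‖ContinuousLinearMap.adjoint Dc‖ + 1) * ‖(ContinuousLinearMap.adjoint R) y‖ := by
          have := norm_nonneg ((ContinuousLinearMap.adjoint R) y)
          nlinarith [norm_nonneg (ContinuousLinearMap.adjoint Dc)]
  · -- majorization → range inclusion, via Hahn-Banach and Riesz representation
    rintro ⟨c, hc, hineq⟩
    rintro _ ⟨x, rfl⟩
    have key : ∀ y y' : Y, ContinuousLinearMap.adjoint R y = ContinuousLinearMap.adjoint R y' →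
        ContinuousLinearMap.adjoint L y = ContinuousLinearMap.adjoint L y' := by
      intro y y' hyy
      have h0 := hineq (y - y')
      rw [map_sub, map_sub, hyy, sub_self, norm_zero, mul_zero] at h0
      have := le_antisymm h0 (norm_nonneg _)
      rwa [norm_sub_eq_zero_iff] at this
    set p : Submodule ℝ U := LinearMap.range ((ContinuousLinearMap.adjoint R : Y →L[ℝ] U) : Y →ₗ[ℝ] U) with hp
    have hrep : ∀ v : p, ∃ y : Y, ContinuousLinearMap.adjoint R y = (v : U) := fun v => v.2
    choose rep hrepeq using hrep
    let f₀ : p →ₗ[ℝ] ℝ :=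
      { toFun := fun v => inner ℝ (ContinuousLinearMap.adjoint L (rep v)) x
        map_add' := by
          intro v w
          have h1 : ContinuousLinearMap.adjoint R (rep (v + w)) =
              ContinuousLinearMap.adjoint R (rep v + rep w) := by
            rw [map_add, hrepeq, hrepeq, hrepeq]; rfl
          rw [key _ _ h1, map_add, inner_add_left]
        map_smul' := by
          intro a v
          have h1 : ContinuousLinearMap.adjoint R (rep (a • v)) =
              ContinuousLinearMap.adjoint R (a • rep v) := by
            rw [map_smul, hrepeq, hrepeq]; rfl
          rw [key _ _ h1, map_smul, inner_smul_left]
          simp }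
    have hbound : ∀ v : p, ‖f₀ v‖ ≤ (c * ‖x‖) * ‖v‖ := by
      intro v
      have h1 : ‖f₀ v‖ ≤ ‖ContinuousLinearMap.adjoint L (rep v)‖ * ‖x‖ := by
        exact norm_inner_le_norm (𝕜 := ℝ) (ContinuousLinearMap.adjoint L (rep v)) x
      have h2 : ‖ContinuousLinearMap.adjoint L (rep v)‖ ≤
          c * ‖ContinuousLinearMap.adjoint R (rep v)‖ := hineq _
      rw [hrepeq] at h2
      calc ‖f₀ v‖ ≤ ‖ContinuousLinearMap.adjoint L (rep v)‖ * ‖x‖ := h1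
        _ ≤ (c * ‖(v : U)‖) * ‖x‖ := by
            apply mul_le_mul_of_nonneg_right h2 (norm_nonneg x)
        _ = (c * ‖x‖) * ‖v‖ := by rw [Submodule.norm_coe]; ring
    let f : p →L[ℝ] ℝ := f₀.mkContinuous (c * ‖x‖) hbound
    obtain ⟨g, hg, -⟩ := exists_extension_norm_eq p f
    set u : U := (InnerProductSpace.toDual ℝ U).symm g with hu
    refine ⟨u, ?_⟩
    refine ext_inner_right ℝ fun y => ?_
    have hvmem : ContinuousLinearMap.adjoint R y ∈ p := ⟨y, rfl⟩
    have hgv : g (ContinuousLinearMap.adjoint R y) = f ⟨_, hvmem⟩ := hg ⟨_, hvmem⟩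
    have hfv : (f ⟨ContinuousLinearMap.adjoint R y, hvmem⟩ : ℝ) =
        inner ℝ (ContinuousLinearMap.adjoint L y) x := by
      show (inner ℝ (ContinuousLinearMap.adjoint L (rep ⟨_, hvmem⟩)) x : ℝ) = _
      rw [key _ _ (by rw [hrepeq] : ContinuousLinearMap.adjoint R (rep ⟨_, hvmem⟩) =
        ContinuousLinearMap.adjoint R y)]
    have h1 : (inner ℝ (R u) y : ℝ) = inner ℝ u (ContinuousLinearMap.adjoint R y) := by
      rw [real_inner_comm, ← ContinuousLinearMap.adjoint_inner_left, real_inner_comm]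
    have h2 : (inner ℝ u (ContinuousLinearMap.adjoint R y) : ℝ) =
        g (ContinuousLinearMap.adjoint R y) := by
      rw [hu, InnerProductSpace.toDual_symm_apply]
    rw [h1, h2, hgv, hfv, ContinuousLinearMap.adjoint_inner_left, real_inner_comm]
end
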